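/- Let G be an ordered graph on [n] and let A ⊆ [n]. Then the number of distinct ordered graphs of the form G − a with a ∈ A satisfies |{G − a : a ∈ A}| ≥ (|A| − m(G))/2. -/

import Mathlib

namespace OrderedGraphs

/-- The order-preserving map `Fin (n-1) → Fin n` that skips the vertex `v`. -/
def delMap {n : ℕ} (v : Fin n) (i : Fin (n - 1)) : Fin n :=
  if h : (i : ℕ) < (v : ℕ) then ⟨i, lt_trans h v.isLt⟩
  else ⟨(i : ℕ) + 1, by have h1 := i.isLt; have h2 := v.isLt; omega⟩

/-- `erase G v` is the ordered graph `G − v` on `[n-1]`, obtained by deleting `v` and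
relabelling the remaining vertices order-preservingly. -/
def erase {n : ℕ} (G : SimpleGraph (Fin n)) (v : Fin n) : SimpleGraph (Fin (n - 1)) where
  Adj i j := G.Adj (delMap v i) (delMap v j)
  symm := ⟨fun i j h => G.adj_symm h⟩
  loopless := ⟨fun i h => G.irrefl h⟩

/-- The shadow `∂G` of a single ordered graph. -/
def shadow {n : ℕ} (G : SimpleGraph (Fin n)) : Set (SimpleGraph (Fin (n - 1))) :=
  {H | ∃ v : Fin n, H = erase G v}

/-- The shadow `∂𝒢` of a collection of ordered graphs. -/
def shadowCol {n : ℕ} (𝒢 : Set (SimpleGraph (Fin n))) : Set (SimpleGraph (Fin (n - 1))) :=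
  ⋃ G ∈ 𝒢, shadow G

/-- `x ∼ y` : the relation `Γ(x) \ {y} = Γ(y) \ {x}`. -/
def simRel {n : ℕ} (G : SimpleGraph (Fin n)) (x y : Fin n) : Prop :=
  G.neighborSet x \ {y} = G.neighborSet y \ {x}

/-- A set of consecutive vertices whose elements are pairwise `∼`-equivalent. -/
def IsHomInterval {n : ℕ} (G : SimpleGraph (Fin n)) (B : Set (Fin n)) : Prop :=
  B.OrdConnected ∧ ∀ x ∈ B, ∀ y ∈ B, simRel G x y

/-- A homogeneous block: a maximal nonempty set of consecutive vertices whose elements are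
pairwise `∼`-equivalent. -/
def IsHomBlock {n : ℕ} (G : SimpleGraph (Fin n)) (B : Set (Fin n)) : Prop :=
  B.Nonempty ∧ IsHomInterval G B ∧ ∀ C, IsHomInterval G C → B ⊆ C → B = C

open Classical in
/-- The excess `m(G) = Σ_{B : |B| ≥ 3} (|B| − 2)`, the sum over homogeneous blocks;
(truncated ℕ-subtraction makes blocks with `|B| ≤ 2` contribute `0`). -/
noncomputable def excess {n : ℕ} (G : SimpleGraph (Fin n)) : ℕ :=
  ∑ B ∈ Finset.univ.filter (fun B : Finset (Fin n) => IsHomBlock G ↑B), (B.card - 2)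

/-- Two ordered graphs have the same type. -/
def SameType {n n' : ℕ} (G : SimpleGraph (Fin n)) (G' : SimpleGraph (Fin n')) : Prop :=
  ∃ (k : ℕ) (B : Fin k → Set (Fin n)) (B' : Fin k → Set (Fin n')),
    (∀ i, IsHomBlock G (B i)) ∧ (∀ C, IsHomBlock G C → ∃ i, C = B i) ∧
    (∀ i j : Fin k, i < j → ∀ x ∈ B i, ∀ y ∈ B j, x < y) ∧
    (∀ i, IsHomBlock G' (B' i)) ∧ (∀ C, IsHomBlock G' C → ∃ i, C = B' i) ∧
    (∀ i j : Fin k, i < j → ∀ x ∈ B' i, ∀ y ∈ B' j, x < y) ∧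
    (∀ i j : Fin k, (∀ u ∈ B i, ∀ v ∈ B j, u ≠ v → G.Adj u v) ↔
            (∀ u ∈ B' i, ∀ v ∈ B' j, u ≠ v → G'.Adj u v)) ∧
    (∀ i, (B i).ncard = 1 ↔ (B' i).ncard = 1)

/-- The shadow within types `∂_τ G`. -/
def typeShadow {n : ℕ} (G : SimpleGraph (Fin n)) : Set (SimpleGraph (Fin (n - 1))) :=
  {H ∈ shadow G | SameType H G}

/-- The shadow within types `∂_τ 𝒢` of a collection. -/
def typeShadowCol {n : ℕ} (𝒢 : Set (SimpleGraph (Fin n))) : Set (SimpleGraph (Fin (n - 1))) :=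
  ⋃ G ∈ 𝒢, typeShadow G

/-- `Z^d(n) = {x ∈ ℤ^d : x_i ≥ 0, Σ_i x_i = n}`. -/
def Zdn (d n : ℕ) : Set (Fin d → ℤ) := {x | (∀ i, 0 ≤ x i) ∧ ∑ i, x i = (n : ℤ)}

/-- A line in `Z^d(n)`, determined by two coordinates `j, k`. -/
def ZLine (d n : ℕ) (j k : Fin d) : Set (Fin d → ℤ) :=
  {x ∈ Zdn d n | ∀ i, i ≠ j → i ≠ k → x i = 0}

/-- The shadow of a subset `A ⊆ Z^d(n)`. -/
def Zshadow (d n : ℕ) (A : Set (Fin d → ℤ)) : Set (Fin d → ℤ) :=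
  {x ∈ Zdn d (n - 1) | ∃ y ∈ A, ∀ i, x i ≤ y i}

/-- `phiAt G d x` : `x ∈ ℤ^d` is the image `φ(G)` of `G`, i.e. the homogeneous blocks of `G`
of size at least `2`, in increasing order, are `B_1 < ⋯ < B_d` and `x i = |B_i| − 2`. -/
def phiAt {n : ℕ} (G : SimpleGraph (Fin n)) (d : ℕ) (x : Fin d → ℤ) : Prop :=
  ∃ B : Fin d → Set (Fin n),
    (∀ i, IsHomBlock G (B i) ∧ 2 ≤ (B i).ncard) ∧
    (∀ C, IsHomBlock G C → 2 ≤ C.ncard → ∃ i, C = B i) ∧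
    (∀ i j : Fin d, i < j → ∀ u ∈ B i, ∀ v ∈ B j, u < v) ∧
    (∀ i, x i = ((B i).ncard : ℤ) - 2)

/-- `𝒢₀` (a set of ordered graphs of a common type, of common excess `m`) contains a line:
some subset `S ⊆ 𝒢₀` has `φ(S)` equal to a line in `Z^d(m)`. -/
def ContainsLine {n : ℕ} (𝒢₀ : Set (SimpleGraph (Fin n))) (m : ℕ) : Prop :=
  ∃ S ⊆ 𝒢₀, ∃ (d : ℕ) (j k : Fin d),
    {x : Fin d → ℤ | ∃ G ∈ S, phiAt G d x} = ZLine d m j k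

/-- `eraseSet G X` is `G − X`: delete all vertices of `X` and relabel order-preservingly. -/
noncomputable def eraseSet {n : ℕ} (G : SimpleGraph (Fin n)) (X : Finset (Fin n)) :
    SimpleGraph (Fin (n - X.card)) where
  Adj i j := G.Adj ((Xᶜ.orderIsoOfFin (by rw [Finset.card_compl, Fintype.card_fin]) i) : Fin n)
                   ((Xᶜ.orderIsoOfFin (by rw [Finset.card_compl, Fintype.card_fin]) j) : Fin n)
  symm := ⟨fun i j h => G.adj_symm h⟩
  loopless := ⟨fun i h => G.irrefl h⟩

/-- A semi-homogeneous block: a set `B` of consecutive vertices such that all vertices of `B`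
have the same neighbourhood outside `B`, and, for some `L ⊆ ℕ`, two vertices `x, y ∈ B` are
adjacent iff `|x − y| ∈ L`. -/
def IsSemiHomBlock {n : ℕ} (G : SimpleGraph (Fin n)) (B : Set (Fin n)) : Prop :=
  B.OrdConnected ∧
  (∀ x ∈ B, ∀ y ∈ B, G.neighborSet x \ B = G.neighborSet y \ B) ∧
  ∃ L : Set ℕ, ∀ x ∈ B, ∀ y ∈ B, (G.Adj x y ↔ ((x : ℤ) - (y : ℤ)).natAbs ∈ L)


lemma delMap_val {n : ℕ} (v : Fin n) (i : Fin (n-1)) :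
    ((delMap v i : Fin n) : ℕ) = if (i : ℕ) < (v : ℕ) then (i : ℕ) else (i : ℕ) + 1 := by
  unfold delMap; split <;> simp_all

lemma adj_of_erase_eq {n : ℕ} {G : SimpleGraph (Fin n)} {a b : Fin n}
    (h : erase G a = erase G b) (i j : Fin (n-1)) :
    G.Adj (delMap a i) (delMap a j) ↔ G.Adj (delMap b i) (delMap b j) := by
  have : (erase G a).Adj i j ↔ (erase G b).Adj i j := by rw [h]
  exact this

lemma simRel_iff {n : ℕ} {G : SimpleGraph (Fin n)} {x y : Fin n} :
    simRel G x y ↔ ∀ z, z ≠ x → z ≠ y → (G.Adj x z ↔ G.Adj y z) := by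
  constructor
  · intro h z hzx hzy
    have hz : z ∈ G.neighborSet x \ {y} ↔ z ∈ G.neighborSet y \ {x} := by rw [h]
    simp only [Set.mem_diff, SimpleGraph.mem_neighborSet, Set.mem_singleton_iff] at hz
    constructor
    · intro ha; exact (hz.mp ⟨ha, hzy⟩).1
    · intro ha; exact (hz.mpr ⟨ha, hzx⟩).1
  · intro h
    ext z
    simp only [Set.mem_diff, SimpleGraph.mem_neighborSet, Set.mem_singleton_iff]
    rcases eq_or_ne z x with rfl | hzx
    · simp [G.loopless]
    rcases eq_or_ne z y with rfl | hzy
    · simp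
    · rw [h z hzx hzy]; tauto

lemma shift_out {n : ℕ} {G : SimpleGraph (Fin n)} {a b : Fin n}
    (h : erase G a = erase G b) (hab : (a : ℕ) < b)
    {z x x' : Fin n} (hz : (z : ℕ) < a ∨ (b : ℕ) < z)
    (hx1 : (a : ℕ) ≤ x) (hx2 : (x : ℕ) < b) (hx' : (x' : ℕ) = (x : ℕ) + 1) :
    G.Adj z x ↔ G.Adj z x' := by
  have hbn := b.isLt
  have hj : (x : ℕ) < n - 1 := by omega
  set j : Fin (n-1) := ⟨x, hj⟩ with hjdef
  have hja : delMap a j = x' := by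
    apply Fin.ext; rw [delMap_val]; simp only [hjdef]; rw [if_neg (by omega)]; omega
  have hjb : delMap b j = x := by
    apply Fin.ext; rw [delMap_val]; simp only [hjdef]; rw [if_pos (by omega)]
  rcases hz with hz1 | hz2
  · have hi : (z : ℕ) < n - 1 := by omega
    set i : Fin (n-1) := ⟨z, hi⟩ with hidef
    have hia : delMap a i = z := by
      apply Fin.ext; rw [delMap_val]; simp only [hidef]; rw [if_pos (by omega)]
    have hib : delMap b i = z := by
      apply Fin.ext; rw [delMap_val]; simp only [hidef]; rw [if_pos (by omega)]
    have := adj_of_erase_eq h i j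
    rw [hia, hib, hja, hjb] at this
    exact this.symm
  · have hzn := z.isLt
    have hi : (z : ℕ) - 1 < n - 1 := by omega
    set i : Fin (n-1) := ⟨(z : ℕ) - 1, hi⟩ with hidef
    have hia : delMap a i = z := by
      apply Fin.ext; rw [delMap_val]; simp only [hidef]; rw [if_neg (by omega)]; omega
    have hib : delMap b i = z := by
      apply Fin.ext; rw [delMap_val]; simp only [hidef]; rw [if_neg (by omega)]; omega
    have := adj_of_erase_eq h i j
    rw [hia, hib, hja, hjb] at this
    exact this.symm

lemma shift_in {n : ℕ} {G : SimpleGraph (Fin n)} {a b : Fin n}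
    (h : erase G a = erase G b) (hab : (a : ℕ) < b)
    {x y x' y' : Fin n} (hx1 : (a : ℕ) ≤ x) (hx2 : (x : ℕ) < b)
    (hy1 : (a : ℕ) ≤ y) (hy2 : (y : ℕ) < b)
    (hx' : (x' : ℕ) = (x : ℕ) + 1) (hy' : (y' : ℕ) = (y : ℕ) + 1) :
    G.Adj x y ↔ G.Adj x' y' := by
  have hbn := b.isLt
  set i : Fin (n-1) := ⟨x, by omega⟩ with hidef
  set j : Fin (n-1) := ⟨y, by omega⟩ with hjdef
  have hia : delMap a i = x' := by
    apply Fin.ext; rw [delMap_val]; simp only [hidef]; rw [if_neg (by omega)]; omega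
  have hib : delMap b i = x := by
    apply Fin.ext; rw [delMap_val]; simp only [hidef]; rw [if_pos (by omega)]
  have hja : delMap a j = y' := by
    apply Fin.ext; rw [delMap_val]; simp only [hjdef]; rw [if_neg (by omega)]; omega
  have hjb : delMap b j = y := by
    apply Fin.ext; rw [delMap_val]; simp only [hjdef]; rw [if_pos (by omega)]
  have := adj_of_erase_eq h i j
  rw [hia, hib, hja, hjb] at this
  exact this.symm

-- appended to part1 before `end`
lemma out_const {n : ℕ} {G : SimpleGraph (Fin n)} {a c : Fin n}
    (h : erase G a = erase G c) (hac : (a : ℕ) < c)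
    {z : Fin n} (hz : (z : ℕ) < a ∨ (c : ℕ) < z) :
    ∀ k : ℕ, ∀ u u' : Fin n, (a : ℕ) ≤ u → (u' : ℕ) = (u : ℕ) + k → (u' : ℕ) ≤ c →
      (G.Adj z u ↔ G.Adj z u') := by
  intro k
  induction k with
  | zero => intro u u' _ h1 _; have : u = u' := Fin.ext (by omega); rw [this]
  | succ k ih =>
    intro u u' hu h1 h2
    have hm : (u : ℕ) + k < n := by have := c.isLt; omega
    set m : Fin n := ⟨(u : ℕ) + k, hm⟩ with hmdef
    have step : G.Adj z m ↔ G.Adj z u' :=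
      shift_out h hac hz (x := m) (by simp [hmdef]; omega) (by simp [hmdef]; omega)
        (by simp [hmdef]; omega)
    have := ih u m hu (by simp [hmdef]) (by simp [hmdef]; omega)
    exact this.trans step

lemma diff_det {n : ℕ} {G : SimpleGraph (Fin n)} {a c : Fin n}
    (h : erase G a = erase G c) (hac : (a : ℕ) < c) :
    ∀ k : ℕ, ∀ x y y₀ : Fin n, (x : ℕ) = (a : ℕ) + k → (y : ℕ) ≤ c → (x : ℕ) < y →
      (y₀ : ℕ) = (y : ℕ) - k → (G.Adj x y ↔ G.Adj a y₀) := by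
  intro k
  induction k with
  | zero =>
    intro x y y₀ h1 _ _ h2
    have hx : x = a := Fin.ext (by omega)
    have hy : y₀ = y := Fin.ext (by omega)
    rw [hx, hy]
  | succ k ih =>
    intro x y y₀ h1 hyc hxy h2
    have hx1 : (x : ℕ) - 1 < n := by have := x.isLt; omega
    have hy1 : (y : ℕ) - 1 < n := by have := y.isLt; omega
    set x₁ : Fin n := ⟨(x : ℕ) - 1, hx1⟩ with hx₁
    set y₁ : Fin n := ⟨(y : ℕ) - 1, hy1⟩ with hy₁
    have step : G.Adj x₁ y₁ ↔ G.Adj x y :=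
      shift_in h hac (by simp [hx₁]; omega) (by simp [hx₁]; omega)
        (by simp [hy₁]; omega) (by simp [hy₁]; omega) (by simp [hx₁]; omega) (by simp [hy₁]; omega)
    have := ih x₁ y₁ y₀ (by simp [hx₁]; omega) (by simp [hy₁]; omega)
      (by simp [hx₁, hy₁]; omega) (by simp [hy₁]; omega)
    exact step.symm.trans this

lemma adj_diff {n : ℕ} {G : SimpleGraph (Fin n)} {a c : Fin n}
    (h : erase G a = erase G c) (hac : (a : ℕ) < c)
    {x y w : Fin n} (hx : (a : ℕ) ≤ x) (hxy : (x : ℕ) < y) (hyc : (y : ℕ) ≤ c)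
    (hw : (w : ℕ) = (a : ℕ) + ((y : ℕ) - (x : ℕ))) :
    G.Adj x y ↔ G.Adj a w :=
  diff_det h hac ((x : ℕ) - a) x y w (by omega) hyc hxy (by omega)

lemma const_L {n : ℕ} {G : SimpleGraph (Fin n)} {a b c : Fin n}
    (h1 : erase G a = erase G b) (h2 : erase G a = erase G c)
    (hab : (a : ℕ) < b) (hbc : (b : ℕ) < c) :
    ∀ e : ℕ, 1 ≤ e → e + 1 ≤ (c : ℕ) - a → ∀ w w' : Fin n,
      (w : ℕ) = (a : ℕ) + e → (w' : ℕ) = (a : ℕ) + e + 1 → (G.Adj a w ↔ G.Adj a w') := by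
  intro e he1 he2 w w' hw hw'
  have hcn := c.isLt
  have hzlt : min ((b : ℕ) + e) (c : ℕ) < n := by omega
  set Z : Fin n := ⟨min ((b : ℕ) + e) (c : ℕ), hzlt⟩ with hZ
  have hZval : (Z : ℕ) = min ((b : ℕ) + e) (c : ℕ) := rfl
  have hZb : (b : ℕ) < Z := by rw [hZval]; omega
  have hZc : (Z : ℕ) ≤ c := by rw [hZval]; omega
  have hZae : (a : ℕ) + e + 1 ≤ Z := by rw [hZval]; omega
  set x : Fin n := ⟨(Z : ℕ) - e - 1, by omega⟩ with hx
  set x' : Fin n := ⟨(Z : ℕ) - e, by omega⟩ with hx'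
  have hxval : (x : ℕ) = (Z : ℕ) - e - 1 := rfl
  have hx'val : (x' : ℕ) = (Z : ℕ) - e := rfl
  have hxa : (a : ℕ) ≤ x := by rw [hxval]; omega
  have hxb : (x : ℕ) < b := by rw [hxval, hZval]; omega
  have so : G.Adj Z x ↔ G.Adj Z x' :=
    shift_out h1 hab (Or.inr hZb) hxa hxb (by omega)
  have d1 : G.Adj x Z ↔ G.Adj a w' :=
    adj_diff h2 (by omega) hxa (by omega) hZc (by omega)
  have d2 : G.Adj x' Z ↔ G.Adj a w :=
    adj_diff h2 (by omega) (by omega) (by omega) hZc (by omega)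
  rw [G.adj_comm Z x, G.adj_comm Z x'] at so
  exact d2.symm.trans (so.symm.trans d1)

lemma const_chain {n : ℕ} {G : SimpleGraph (Fin n)} {a b c : Fin n}
    (h1 : erase G a = erase G b) (h2 : erase G a = erase G c)
    (hab : (a : ℕ) < b) (hbc : (b : ℕ) < c) :
    ∀ d : ℕ, 1 ≤ d → d ≤ (c : ℕ) - a → ∀ w w₁ : Fin n,
      (w : ℕ) = (a : ℕ) + d → (w₁ : ℕ) = (a : ℕ) + 1 → (G.Adj a w ↔ G.Adj a w₁) := by
  intro d
  induction d with
  | zero => omega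
  | succ d ih =>
    intro _ hd w w₁ hw hw₁
    rcases Nat.eq_or_lt_of_le (show 1 ≤ d + 1 from by omega) with h1' | h1'
    · have : w = w₁ := Fin.ext (by omega)
      rw [this]
    · have hd1 : 1 ≤ d := by omega
      have hwd : (a : ℕ) + d < n := by have := c.isLt; omega
      set wd : Fin n := ⟨(a : ℕ) + d, hwd⟩ with hwddef
      have step : G.Adj a wd ↔ G.Adj a w :=
        const_L h1 h2 hab hbc d hd1 (by omega) wd w (by simp [hwddef]) (by omega)
      exact step.symm.trans (ih hd1 (by omega) wd w₁ (by simp [hwddef]) hw₁)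

lemma three_point {n : ℕ} {G : SimpleGraph (Fin n)} {a b c : Fin n}
    (h1 : erase G a = erase G b) (h2 : erase G a = erase G c)
    (hab : (a : ℕ) < b) (hbc : (b : ℕ) < c) :
    IsHomInterval G (Set.Icc a c) := by
  have hcn := c.isLt
  have hac : (a : ℕ) < c := by omega
  -- first: adjacency of any pair in [a,c] is ↔ G.Adj a ⟨a+1⟩
  have ha1 : (a : ℕ) + 1 < n := by omega
  set a1 : Fin n := ⟨(a : ℕ) + 1, ha1⟩ with ha1def
  have pairP : ∀ p q : Fin n, (a : ℕ) ≤ p → (p : ℕ) < q → (q : ℕ) ≤ c →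
      (G.Adj p q ↔ G.Adj a a1) := by
    intro p q hp hpq hqc
    have hw : (a : ℕ) + ((q : ℕ) - p) < n := by omega
    set w : Fin n := ⟨(a : ℕ) + ((q : ℕ) - p), hw⟩ with hwdef
    have d := adj_diff h2 hac hp hpq hqc (w := w) (by simp [hwdef])
    have cc := const_chain h1 h2 hab hbc ((q : ℕ) - p) (by omega) (by omega) w a1
      (by simp [hwdef]) (by simp [ha1def])
    exact d.trans cc
  have pairAny : ∀ p q : Fin n, (a : ℕ) ≤ p → (p : ℕ) ≤ c → (a : ℕ) ≤ q → (q : ℕ) ≤ c →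
      p ≠ q → (G.Adj p q ↔ G.Adj a a1) := by
    intro p q hp hpc hq hqc hne
    rcases lt_or_gt_of_ne (fun hh : (p : ℕ) = q => hne (Fin.ext hh)) with hlt | hgt
    · exact pairP p q hp hlt hqc
    · rw [G.adj_comm]; exact pairP q p hq hgt hpc
  constructor
  · exact Set.ordConnected_Icc
  · intro x hx y hy
    simp only [Set.mem_Icc] at hx hy
    have hxa : (a : ℕ) ≤ x := hx.1
    have hxc : (x : ℕ) ≤ c := hx.2
    have hya : (a : ℕ) ≤ y := hy.1
    have hyc : (y : ℕ) ≤ c := hy.2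
    rw [simRel_iff]
    intro z hzx hzy
    rcases eq_or_ne x y with rfl | hxy
    · rfl
    by_cases hzin : (a : ℕ) ≤ z ∧ (z : ℕ) ≤ c
    · rw [G.adj_comm x z, G.adj_comm y z] at *
      rw [pairAny z x hzin.1 hzin.2 hxa hxc hzx, pairAny z y hzin.1 hzin.2 hya hyc hzy]
    · -- z outside [a,c]
      push_neg at hzin
      have hzout : (z : ℕ) < a ∨ (c : ℕ) < z := by
        by_cases hz : (a : ℕ) ≤ z
        · right; exact lt_of_not_ge (fun hh => absurd (hzin hz) (not_lt.mpr hh))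
        · left; omega
      have key : ∀ u u' : Fin n, (a : ℕ) ≤ u → (u : ℕ) ≤ u' → (u' : ℕ) ≤ c →
          (G.Adj z u ↔ G.Adj z u') := by
        intro u u' hu huu hu'
        exact out_const h2 hac hzout ((u' : ℕ) - u) u u' hu (by omega) (by omega)
      rw [G.adj_comm x z, G.adj_comm y z]
      rcases le_or_gt (x : ℕ) (y : ℕ) with hle | hlt
      · exact key x y hxa hle hyc
      · exact (key y x hya (by omega) hxc).symm
lemma homInt_adj_const {n : ℕ} {G : SimpleGraph (Fin n)} {B : Set (Fin n)}
    (hB : IsHomInterval G B) {p q z : Fin n} (hp : p ∈ B) (hq : q ∈ B)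
    (hzp : z ≠ p) (hzq : z ≠ q) : G.Adj p z ↔ G.Adj q z := by
  rcases eq_or_ne p q with rfl | hpq
  · rfl
  · exact (simRel_iff.mp (hB.2 p hp q hq)) z hzp hzq

lemma homInt_pair_pair {n : ℕ} {G : SimpleGraph (Fin n)} {B : Set (Fin n)}
    (hB : IsHomInterval G B) {p q r s : Fin n} (hp : p ∈ B) (hq : q ∈ B)
    (hr : r ∈ B) (hs : s ∈ B) (hpq : p ≠ q) (hrs : r ≠ s) :
    G.Adj p q ↔ G.Adj r s := by
  rcases eq_or_ne q r with rfl | hqr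
  · -- q = r
    have h1 : G.Adj p q ↔ G.Adj s q := homInt_adj_const hB hp hs hpq.symm hrs
    exact h1.trans (G.adj_comm s q)
  · have s1 : G.Adj p q ↔ G.Adj r q := homInt_adj_const hB hp hr hpq.symm hqr
    have s2 : G.Adj r q ↔ G.Adj r s := by
      rw [G.adj_comm r q, G.adj_comm r s]
      exact homInt_adj_const hB hq hs hqr.symm hrs
    exact s1.trans s2

lemma erase_eq_of_homInt_le {n : ℕ} {G : SimpleGraph (Fin n)} {B : Set (Fin n)}
    (hB : IsHomInterval G B) {x y : Fin n} (hx : x ∈ B) (hy : y ∈ B) (hle : x ≤ y) :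
    erase G x = erase G y := by
  · ext i j
    show G.Adj (delMap x i) (delMap x j) ↔ G.Adj (delMap y i) (delMap y j)
    have hmem : ∀ u : Fin n, (x : ℕ) ≤ (u : ℕ) → (u : ℕ) ≤ (y : ℕ) → u ∈ B := by
      intro u h1 h2
      exact hB.1.out hx hy ⟨by exact h1, by exact h2⟩
    have hxy : (x : ℕ) ≤ y := hle
    have dval : ∀ (v : Fin n) (i : Fin (n-1)),
        ((delMap v i : Fin n) : ℕ) = if (i:ℕ) < (v:ℕ) then (i:ℕ) else (i:ℕ)+1 :=
      fun v i => delMap_val v i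
    -- classify i
    rcases eq_or_ne (delMap x i) (delMap y i) with hi | hi
    · rcases eq_or_ne (delMap x j) (delMap y j) with hj | hj
      · rw [hi, hj]
      · -- j shifted: x ≤ j < y
        have hjval : ¬ ((j:ℕ) < x) ∧ (j:ℕ) < y := by
          by_contra hc
          apply hj; apply Fin.ext; rw [dval, dval]
          rcases Nat.lt_or_ge (j:ℕ) (x:ℕ) with h1 | h1
          · rw [if_pos h1, if_pos (by omega)]
          · push_neg at hc
            have := hc (by omega)
            rw [if_neg (by omega), if_neg (by omega)]
        have hv1 : (delMap x j) ∈ B := by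
          apply hmem <;> rw [dval] <;> rw [if_neg (by omega)] <;> omega
        have hv2 : (delMap y j) ∈ B := by
          apply hmem <;> rw [dval] <;> rw [if_pos (by omega)] <;> omega
        have hzne1 : (delMap x i) ≠ (delMap x j) := by
          intro hc; apply hj
          have c1 := dval x i; have c2 := dval x j; have c3 := dval y i; have c4 := dval y j
          have hcv : ((delMap x i : Fin n):ℕ) = ((delMap x j : Fin n):ℕ) := by rw [hc]
          have hcv2 : ((delMap x i : Fin n):ℕ) = ((delMap y i : Fin n):ℕ) := by rw [hi]
          apply Fin.ext
          split at c1 <;> split at c2 <;> split at c3 <;> split at c4 <;> omega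
        have hzne2 : (delMap x i) ≠ (delMap y j) := by
          intro hc
          have c1 := dval x i; have c2 := dval x j; have c3 := dval y i; have c4 := dval y j
          have hcv : ((delMap x i : Fin n):ℕ) = ((delMap y j : Fin n):ℕ) := by rw [hc]
          have hcv2 : ((delMap x i : Fin n):ℕ) = ((delMap y i : Fin n):ℕ) := by rw [hi]
          have hne : (i:ℕ) ≠ (j:ℕ) := by
            intro he
            apply hj; apply Fin.ext
            split at c1 <;> split at c2 <;> split at c3 <;> split at c4 <;> omega
          split at c1 <;> split at c2 <;> split at c3 <;> split at c4 <;> omega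
        rw [hi]
        rw [G.adj_comm _ (delMap x j), G.adj_comm _ (delMap y j)]
        exact homInt_adj_const hB hv1 hv2 (by rw [hi] at hzne1; exact hzne1)
          (by rw [hi] at hzne2; exact hzne2)
    · -- i shifted
      have hival : ¬ ((i:ℕ) < x) ∧ (i:ℕ) < y := by
        by_contra hc
        apply hi; apply Fin.ext; rw [dval, dval]
        rcases Nat.lt_or_ge (i:ℕ) (x:ℕ) with h1 | h1
        · rw [if_pos h1, if_pos (by omega)]
        · push_neg at hc
          have := hc (by omega)
          rw [if_neg (by omega), if_neg (by omega)]
      have hu1 : (delMap x i) ∈ B := by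
        apply hmem <;> rw [dval] <;> rw [if_neg (by omega)] <;> omega
      have hu2 : (delMap y i) ∈ B := by
        apply hmem <;> rw [dval] <;> rw [if_pos (by omega)] <;> omega
      rcases eq_or_ne (delMap x j) (delMap y j) with hj | hj
      · -- only i shifted
        have hzne1 : (delMap x j) ≠ (delMap x i) := by
          intro hc
          have c1 := dval x i; have c2 := dval x j; have c3 := dval y i; have c4 := dval y j
          have hcv : ((delMap x j : Fin n):ℕ) = ((delMap x i : Fin n):ℕ) := by rw [hc]
          have hcv2 : ((delMap x j : Fin n):ℕ) = ((delMap y j : Fin n):ℕ) := by rw [hj]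
          apply hi; apply Fin.ext
          split at c1 <;> split at c2 <;> split at c3 <;> split at c4 <;> omega
        have hzne2 : (delMap x j) ≠ (delMap y i) := by
          intro hc
          have c1 := dval x i; have c2 := dval x j; have c3 := dval y i; have c4 := dval y j
          have hcv : ((delMap x j : Fin n):ℕ) = ((delMap y i : Fin n):ℕ) := by rw [hc]
          have hcv2 : ((delMap x j : Fin n):ℕ) = ((delMap y j : Fin n):ℕ) := by rw [hj]
          have hne : (i:ℕ) ≠ (j:ℕ) := by
            intro he
            apply hi; apply Fin.ext
            split at c1 <;> split at c2 <;> split at c3 <;> split at c4 <;> omega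
          split at c1 <;> split at c2 <;> split at c3 <;> split at c4 <;> omega
        rw [hj] at hzne1 hzne2
        rw [hj]
        exact homInt_adj_const hB hu1 hu2 hzne1 hzne2
      · -- both shifted
        have hjval : ¬ ((j:ℕ) < x) ∧ (j:ℕ) < y := by
          by_contra hc
          apply hj; apply Fin.ext; rw [dval, dval]
          rcases Nat.lt_or_ge (j:ℕ) (x:ℕ) with h1 | h1
          · rw [if_pos h1, if_pos (by omega)]
          · push_neg at hc
            have := hc (by omega)
            rw [if_neg (by omega), if_neg (by omega)]
        have hv1 : (delMap x j) ∈ B := by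
          apply hmem <;> rw [dval] <;> rw [if_neg (by omega)] <;> omega
        have hv2 : (delMap y j) ∈ B := by
          apply hmem <;> rw [dval] <;> rw [if_pos (by omega)] <;> omega
        rcases eq_or_ne (i:ℕ) (j:ℕ) with hij | hij
        · have e1 : delMap x i = delMap x j := by
            apply Fin.ext; rw [dval, dval, hij]
          have e2 : delMap y i = delMap y j := by
            apply Fin.ext; rw [dval, dval, hij]
          rw [e1, e2]
          simp [G.loopless]
        · have d1 : (delMap x i) ≠ (delMap x j) := by
            intro hc
            have c1 := dval x i; have c2 := dval x j
            have hcv : ((delMap x i : Fin n):ℕ) = ((delMap x j : Fin n):ℕ) := by rw [hc]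
            split at c1 <;> split at c2 <;> omega
          have d2 : (delMap y i) ≠ (delMap y j) := by
            intro hc
            have c3 := dval y i; have c4 := dval y j
            have hcv : ((delMap y i : Fin n):ℕ) = ((delMap y j : Fin n):ℕ) := by rw [hc]
            split at c3 <;> split at c4 <;> omega
          exact homInt_pair_pair hB hu1 hv1 hu2 hv2 d1 d2

lemma erase_eq_of_homInt {n : ℕ} {G : SimpleGraph (Fin n)} {B : Set (Fin n)}
    (hB : IsHomInterval G B) {x y : Fin n} (hx : x ∈ B) (hy : y ∈ B) :
    erase G x = erase G y := by
  rcases le_total x y with hle | hle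
  · exact erase_eq_of_homInt_le hB hx hy hle
  · exact (erase_eq_of_homInt_le hB hy hx hle).symm
lemma exists_block {n : ℕ} {G : SimpleGraph (Fin n)} {S : Set (Fin n)}
    (hS : IsHomInterval G S) (hne : S.Nonempty) :
    ∃ B : Finset (Fin n), IsHomBlock G ↑B ∧ S ⊆ ↑B := by
  classical
  set T := Finset.univ.filter
    (fun C : Finset (Fin n) => IsHomInterval G ↑C ∧ S ⊆ ↑C) with hT
  have hSfin : S.Finite := Set.toFinite S
  have hTne : T.Nonempty := by
    refine ⟨hSfin.toFinset, ?_⟩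
    rw [hT, Finset.mem_filter]
    refine ⟨Finset.mem_univ _, ?_, ?_⟩
    · rw [Set.Finite.coe_toFinset]; exact hS
    · rw [Set.Finite.coe_toFinset]
  obtain ⟨B, hBT, hmax⟩ := T.exists_max_image (fun C => C.card) hTne
  rw [hT, Finset.mem_filter] at hBT
  refine ⟨B, ⟨?_, hBT.2.1, ?_⟩, hBT.2.2⟩
  · obtain ⟨x, hx⟩ := hne
    exact ⟨x, hBT.2.2 hx⟩
  · intro C hC hBC
    have hCfin : C.Finite := Set.toFinite C
    have hCT : hCfin.toFinset ∈ T := by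
      rw [hT, Finset.mem_filter]
      refine ⟨Finset.mem_univ _, ?_, ?_⟩
      · rw [Set.Finite.coe_toFinset]; exact hC
      · rw [Set.Finite.coe_toFinset]
        exact Set.Subset.trans hBT.2.2 hBC
    have hsub : B ⊆ hCfin.toFinset := by
      intro x hx
      rw [Set.Finite.mem_toFinset]
      exact hBC hx
    have hcard := hmax hCfin.toFinset hCT
    have : B = hCfin.toFinset := Finset.eq_of_subset_of_card_le hsub hcard
    rw [this, Set.Finite.coe_toFinset]

theorem erase_card_lower' (n : ℕ) (G : SimpleGraph (Fin n)) (A : Set (Fin n)) :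
    ((A.ncard : ℝ) - (excess G : ℝ)) / 2 ≤
      (({H | ∃ a ∈ A, H = erase G a}).ncard : ℝ) := by
  classical
  have hAfin : A.Finite := Set.toFinite A
  set f : Fin n → SimpleGraph (Fin (n-1)) := erase G with hf
  set A' : Finset (Fin n) := hAfin.toFinset with hA'
  set img : Finset (SimpleGraph (Fin (n-1))) := A'.image f with himg
  set fib : SimpleGraph (Fin (n-1)) → Finset (Fin n) :=
    fun H => A'.filter (fun a => f a = H) with hfib
  have hfmem : ∀ {a H}, a ∈ fib H → f a = H := by
    intro a H ha; rw [hfib] at ha; exact (Finset.mem_filter.mp ha).2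
  have hSeq : {H | ∃ a ∈ A, H = erase G a} = ↑img := by
    ext H
    simp only [Set.mem_setOf_eq, himg, Finset.coe_image, Set.mem_image, Finset.mem_coe,
      hA', hf]
    constructor
    · rintro ⟨a, ha, rfl⟩; exact ⟨a, by rw [Set.Finite.mem_toFinset]; exact ha, rfl⟩
    · rintro ⟨a, ha, rfl⟩; exact ⟨a, by rw [Set.Finite.mem_toFinset] at ha; exact ha, rfl⟩
  have hncard : ({H | ∃ a ∈ A, H = erase G a}).ncard = img.card := by
    rw [hSeq, Set.ncard_coe_finset]
  have hAcard : A.ncard = A'.card := Set.ncard_eq_toFinset_card A hAfin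
  have hsum : A'.card = ∑ H ∈ img, (fib H).card :=
    Finset.card_eq_sum_card_fiberwise (fun a ha => Finset.mem_image_of_mem f ha)
  -- blocks for big fibers
  have block : ∀ H : SimpleGraph (Fin (n-1)), ∃ B : Finset (Fin n),
      3 ≤ (fib H).card → (IsHomBlock G ↑B ∧ ↑(fib H) ⊆ (↑B : Set (Fin n))) := by
    intro H
    by_cases h3 : 3 ≤ (fib H).card
    swap
    · exact ⟨∅, fun h => absurd h h3⟩
    have hfne : (fib H).Nonempty := Finset.card_pos.mp (by omega)
    set a := (fib H).min' hfne with ha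
    set c := (fib H).max' hfne with hc
    have hamem : a ∈ fib H := (fib H).min'_mem hfne
    have hcmem : c ∈ fib H := (fib H).max'_mem hfne
    have hbex : ((fib H) \ {a, c}).Nonempty := by
      by_contra hcon
      rw [Finset.not_nonempty_iff_eq_empty, Finset.sdiff_eq_empty_iff_subset] at hcon
      have := Finset.card_le_card hcon
      have h2 : ({a, c} : Finset (Fin n)).card ≤ 2 :=
        le_trans (Finset.card_insert_le _ _) (by simp)
      omega
    obtain ⟨b, hb⟩ := hbex
    rw [Finset.mem_sdiff] at hb
    have hbmem : b ∈ fib H := hb.1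
    have hba : b ≠ a := by intro hh; exact hb.2 (by simp [hh])
    have hbc : b ≠ c := by intro hh; exact hb.2 (by simp [hh])
    have hab : a < b := lt_of_le_of_ne ((fib H).min'_le b hbmem) (Ne.symm hba)
    have hbclt : b < c := lt_of_le_of_ne ((fib H).le_max' b hbmem) hbc
    have h1 : erase G a = erase G b := by
      rw [show erase G a = f a from rfl, show erase G b = f b from rfl,
        hfmem hamem, hfmem hbmem]
    have h2 : erase G a = erase G c := by
      rw [show erase G a = f a from rfl, show erase G c = f c from rfl,
        hfmem hamem, hfmem hcmem]
    have hint : IsHomInterval G (Set.Icc a c) :=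
      three_point h1 h2 (Fin.lt_def.mp hab) (Fin.lt_def.mp hbclt)
    obtain ⟨B, hB1, hB2⟩ := exists_block hint ⟨a, Set.mem_Icc.mpr ⟨le_refl a, le_of_lt (lt_trans hab hbclt)⟩⟩
    refine ⟨B, fun _ => ⟨hB1, ?_⟩⟩
    intro x hx
    apply hB2
    rw [Finset.mem_coe] at hx
    exact Set.mem_Icc.mpr ⟨(fib H).min'_le x hx, (fib H).le_max' x hx⟩
  choose β hβ using block
  set T := img.filter (fun H => 3 ≤ (fib H).card) with hTdef
  have key : ∑ H ∈ img, ((fib H).card - 2) ≤ excess G := by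
    have e1 : ∑ H ∈ T, ((fib H).card - 2) = ∑ H ∈ img, ((fib H).card - 2) := by
      apply Finset.sum_filter_of_ne
      intro H _ hne
      omega
    have e2 : ∑ H ∈ T, ((fib H).card - 2) ≤ ∑ H ∈ T, ((β H).card - 2) := by
      apply Finset.sum_le_sum
      intro H hH
      rw [hTdef, Finset.mem_filter] at hH
      have hsub : fib H ⊆ β H := by
        rw [← Finset.coe_subset]
        exact (hβ H hH.2).2
      have := Finset.card_le_card hsub
      omega
    have hinj : ∀ x ∈ T, ∀ y ∈ T, β x = β y → x = y := by
      intro H1 hH1 H2 hH2 heq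
      rw [hTdef, Finset.mem_filter] at hH1 hH2
      obtain ⟨a1, ha1⟩ := Finset.card_pos.mp (show 0 < (fib H1).card by omega)
      obtain ⟨a2, ha2⟩ := Finset.card_pos.mp (show 0 < (fib H2).card by omega)
      have hm1 : a1 ∈ (↑(β H1) : Set (Fin n)) := (hβ H1 hH1.2).2 ha1
      have hm2 : a2 ∈ (↑(β H1) : Set (Fin n)) := by rw [heq]; exact (hβ H2 hH2.2).2 ha2
      have hee : erase G a1 = erase G a2 :=
        erase_eq_of_homInt (hβ H1 hH1.2).1.2.1 hm1 hm2
      rw [← hfmem ha1, ← hfmem ha2]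
      exact hee
    have e3 : ∑ H ∈ T, ((β H).card - 2) = ∑ B ∈ T.image β, (B.card - 2) :=
      (Finset.sum_image (f := fun B => B.card - 2) hinj).symm
    have e4 : ∑ B ∈ T.image β, (B.card - 2) ≤ excess G := by
      rw [excess]
      apply Finset.sum_le_sum_of_subset
      intro B hB
      rw [Finset.mem_image] at hB
      obtain ⟨H, hH, rfl⟩ := hB
      rw [hTdef, Finset.mem_filter] at hH
      exact Finset.mem_filter.mpr ⟨Finset.mem_univ _, (hβ H hH.2).1⟩
    omega
  have main : A'.card ≤ 2 * img.card + excess G := by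
    have h1 : A'.card ≤ ∑ H ∈ img, (2 + ((fib H).card - 2)) := by
      rw [hsum]
      apply Finset.sum_le_sum
      intro H _
      omega
    rw [Finset.sum_add_distrib, Finset.sum_const, smul_eq_mul] at h1
    omega
  rw [hncard, hAcard]
  have hc : (A'.card : ℝ) ≤ 2 * (img.card : ℝ) + (excess G : ℝ) := by
    exact_mod_cast main
  linarith

/-- **Lemma.** For an ordered graph `G` on `[n]` and `A ⊆ [n]`, the number of distinct
ordered graphs of the form `G − a` with `a ∈ A` is at least `(|A| − m(G)) / 2`. -/
theorem erase_card_lower (n : ℕ) (G : SimpleGraph (Fin n)) (A : Set (Fin n)) :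
    ((A.ncard : ℝ) - (excess G : ℝ)) / 2 ≤
      (({H | ∃ a ∈ A, H = erase G a}).ncard : ℝ) :=
  erase_card_lower' n G A

end OrderedGraphs
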